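/- arXiv:1812.11433 — 5 statements merged into one kernel-verified Lean document; each statement's English description precedes it below -/
import Mathlib

section
/- Let P and Q be joint distributions of a pair (X, Y) of discrete random variables with X = (X_1, ..., X_p). Suppose P(Y|X) = Q(Y|X) at all points in the support of P, and P(X) is absolutely continuous with respect to Q(X). If Y is conditionally independent of X_j given X_{-j} under Q, then Y is conditionally independent of X_j given X_{-j} under P. -/
open Finset Function

variable {p : ℕ} {A B : Type*}

/-- `P(X = x)`: the marginal distribution of the covariate vector. -/
def pX [Fintype B] (P : (Fin p → A) × B → ℝ) (x : Fin p → A) : ℝ := ∑ y, P (x, y)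

/-- `P(Y = y)`: the marginal distribution of the response. -/
def pY [Fintype A] (P : (Fin p → A) × B → ℝ) (y : B) : ℝ := ∑ x, P (x, y)

/-- `P(X₋ⱼ = x₋ⱼ)`: probability that all coordinates except `j` agree with `x`. -/
def pXmj [Fintype A] [Fintype B] (P : (Fin p → A) × B → ℝ) (j : Fin p) (x : Fin p → A) : ℝ :=
  ∑ a, pX P (Function.update x j a)

/-- `P(Y = y, X₋ⱼ = x₋ⱼ)`. -/
def pYXmj [Fintype A] (P : (Fin p → A) × B → ℝ) (j : Fin p) (x : Fin p → A) (y : B) : ℝ :=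
  ∑ a, P (Function.update x j a, y)

/-- `P` is a probability distribution on the discrete space `(Fin p → A) × B`. -/
def IsDist [Fintype A] [Fintype B] (P : (Fin p → A) × B → ℝ) : Prop :=
  (∀ z, 0 ≤ P z) ∧ ∑ z, P z = 1

/-- `Y ⊥ Xⱼ | X₋ⱼ` under `P`, stated in cross-multiplied (division-free) form:
wherever the conditioning event `X₋ⱼ = x₋ⱼ` has positive probability,
`P(Y = y, Xⱼ = a | X₋ⱼ) = P(Y = y | X₋ⱼ) · P(Xⱼ = a | X₋ⱼ)`. -/
def CondIndep [Fintype A] [Fintype B] (P : (Fin p → A) × B → ℝ) (j : Fin p) : Prop :=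
  ∀ (x : Fin p → A) (y : B) (a : A), 0 < pXmj P j x →
    P (Function.update x j a, y) * pXmj P j x =
      pYXmj P j x y * pX P (Function.update x j a)

/-- If `P(Y|X) = Q(Y|X)` on the support of `P` and `P(X) ≪ Q(X)`,
then conditional independence `Y ⊥ Xⱼ | X₋ⱼ` under `Q` implies it under `P`. -/
theorem condIndep_transfer_of_same_likelihood
    [Fintype A] [Fintype B] (P Q : (Fin p → A) × B → ℝ) (j : Fin p)
    (hP : IsDist P) (hQ : IsDist Q)
    (hlik : ∀ (x : Fin p → A) (y : B), 0 < pX P x → P (x, y) * pX Q x = Q (x, y) * pX P x)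
    (hac : ∀ x : Fin p → A, pX Q x = 0 → pX P x = 0)
    (hQind : CondIndep Q j) :
    CondIndep P j := by
  intro x y a hpos
  have hPnn := hP.1
  have hQnn := hQ.1
  have hpXP : ∀ u, 0 ≤ pX P u := fun u => Finset.sum_nonneg fun _ _ => hPnn _
  have hpXQ : ∀ u, 0 ≤ pX Q u := fun u => Finset.sum_nonneg fun _ _ => hQnn _
  have hle : ∀ u y, P (u, y) ≤ pX P u := fun u y =>
    Finset.single_le_sum (fun b _ => hPnn (u, b)) (Finset.mem_univ y)
  have hexists : ∃ b, 0 < pX P (Function.update x j b) := by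
    by_contra h
    push_neg at h
    have h0 : pXmj P j x ≤ 0 := Finset.sum_nonpos fun b _ => h b
    linarith
  obtain ⟨b, hb⟩ := hexists
  have hQb : 0 < pX Q (Function.update x j b) := by
    rcases lt_or_eq_of_le (hpXQ (Function.update x j b)) with h | h
    · exact h
    · exact absurd (hac _ h.symm) (by linarith)
  have hQmj : 0 < pXmj Q j x := by
    have hh : pX Q (Function.update x j b) ≤ pXmj Q j x :=
      Finset.single_le_sum (fun c _ => hpXQ _) (Finset.mem_univ b)
    linarith
  set c : ℝ := pYXmj Q j x y / pXmj Q j x with hc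
  have key : ∀ b', P (Function.update x j b', y) = c * pX P (Function.update x j b') := by
    intro b'
    set u := Function.update x j b' with hu
    rcases lt_or_eq_of_le (hpXP u) with h | h
    · have hQu : 0 < pX Q u := by
        rcases lt_or_eq_of_le (hpXQ u) with h' | h'
        · exact h'
        · exact absurd (hac _ h'.symm) (by linarith)
      have h1 := hlik u y h
      have h2 := hQind x y b' hQmj
      rw [← hu] at h2
      have h3 : (P (u, y) * pXmj Q j x) * pX Q u =
          (pYXmj Q j x y * pX P u) * pX Q u := by
        linear_combination pXmj Q j x * h1 + pX P u * h2
      have h4 := mul_right_cancel₀ hQu.ne' h3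
      rw [hc]
      field_simp
      linarith
    · have h0 : P (u, y) = 0 := le_antisymm (h ▸ hle u y) (hPnn _)
      rw [h0, ← h]
      ring
  have hsum : pYXmj P j x y = c * pXmj P j x := by
    rw [pYXmj, pXmj, Finset.mul_sum]
    exact Finset.sum_congr rfl fun b' _ => key b'
  rw [key a, hsum]
  ring
end

section
/- Let P and Q be joint distributions of a pair (X, Y) of discrete random variables. Suppose P(X|Y) = Q(X|Y) at all points in the support of P, and P(Y) is absolutely continuous with respect to Q(Y). If Y is conditionally independent of X_j given X_{-j} under Q, then Y is conditionally independent of X_j given X_{-j} under P. -/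
open Finset Function

variable {p : ℕ} {A B : Type*}

/-- If `P(X|Y) = Q(X|Y)` on the support of `P` and `P(Y) ≪ Q(Y)`,
then conditional independence `Y ⊥ Xⱼ | X₋ⱼ` under `Q` implies it under `P`. -/
theorem condIndep_transfer_of_same_covariate_conditional
    [Fintype A] [Fintype B] (P Q : (Fin p → A) × B → ℝ) (j : Fin p)
    (hP : IsDist P) (hQ : IsDist Q)
    (hcond : ∀ (x : Fin p → A) (y : B), 0 < pY P y → P (x, y) * pY Q y = Q (x, y) * pY P y)
    (hac : ∀ y : B, pY Q y = 0 → pY P y = 0)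
    (hQind : CondIndep Q j) :
    CondIndep P j := by
  obtain ⟨hPnn, hPsum⟩ := hP
  obtain ⟨hQnn, hQsum⟩ := hQ
  have hpYP : ∀ y, 0 ≤ pY P y := fun y => Finset.sum_nonneg fun x _ => hPnn _
  have hpYQ : ∀ y, 0 ≤ pY Q y := fun y => Finset.sum_nonneg fun x _ => hQnn _
  set c : B → ℝ := fun y => if 0 < pY P y then pY P y / pY Q y else 0 with hc
  have hM : ∀ (x' : Fin p → A) (y : B), P (x', y) = c y * Q (x', y) := by
    intro x' y
    by_cases h : 0 < pY P y
    · have hQy : 0 < pY Q y := by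
        rcases lt_or_eq_of_le (hpYQ y) with h' | h'
        · exact h'
        · exfalso; have := hac y h'.symm; linarith
      have hce := hcond x' y h
      simp only [hc, if_pos h]
      field_simp
      linarith [hce]
    · have hy0 : pY P y = 0 := le_antisymm (not_lt.mp h) (hpYP y)
      have hx0 : P (x', y) = 0 := by
        have := (Finset.sum_eq_zero_iff_of_nonneg
          (fun x _ => hPnn (x, y))).mp hy0 x' (Finset.mem_univ _)
        exact this
      simp [hc, h, hx0]
  intro x y a hpos
  have hrow : ∀ y', pYXmj P j x y' = c y' * pYXmj Q j x y' := by
    intro y'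
    simp only [pYXmj, hM]
    rw [Finset.mul_sum]
  have hcol : ∀ a', pX P (Function.update x j a') = ∑ y', c y' * Q (Function.update x j a', y') := by
    intro a'
    simp only [pX, hM]
  have hTP : pXmj P j x = ∑ y', c y' * pYXmj Q j x y' := by
    simp only [pXmj]
    rw [Finset.sum_congr rfl (fun a' _ => hcol a'), Finset.sum_comm]
    refine Finset.sum_congr rfl (fun y' _ => ?_)
    simp only [pYXmj]
    rw [Finset.mul_sum]
  by_cases hTQ : 0 < pXmj Q j x
  · have hQ0 : ∀ y', Q (Function.update x j a, y') * pXmj Q j x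
        = pYXmj Q j x y' * pX Q (Function.update x j a) := fun y' => hQind x y' a hTQ
    have hcolA : pX P (Function.update x j a) * pXmj Q j x
        = pX Q (Function.update x j a) * pXmj P j x := by
      rw [hcol a, hTP, Finset.sum_mul, Finset.mul_sum]
      refine Finset.sum_congr rfl (fun y' _ => ?_)
      have := hQ0 y'
      linear_combination c y' * this
    have key : (P (Function.update x j a, y) * pXmj P j x) * pXmj Q j x
        = (pYXmj P j x y * pX P (Function.update x j a)) * pXmj Q j x := by
      rw [hM (Function.update x j a) y, hrow y]
      calc c y * Q (Function.update x j a, y) * pXmj P j x * pXmj Q j x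
          = c y * (Q (Function.update x j a, y) * pXmj Q j x) * pXmj P j x := by ring
        _ = c y * (pYXmj Q j x y * pX Q (Function.update x j a)) * pXmj P j x := by rw [hQ0 y]
        _ = c y * pYXmj Q j x y * (pX Q (Function.update x j a) * pXmj P j x) := by ring
        _ = c y * pYXmj Q j x y * (pX P (Function.update x j a) * pXmj Q j x) := by rw [← hcolA]
        _ = c y * pYXmj Q j x y * pX P (Function.update x j a) * pXmj Q j x := by ring
    exact mul_right_cancel₀ (ne_of_gt hTQ) key
  · exfalso
    have hTQ0 : pXmj Q j x = 0 := by
      have hnn : 0 ≤ pXmj Q j x :=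
        Finset.sum_nonneg fun a' _ => Finset.sum_nonneg fun y' _ => hQnn _
      exact le_antisymm (not_lt.mp hTQ) hnn
    have hQall : ∀ a' y', Q (Function.update x j a', y') = 0 := by
      intro a' y'
      have h1 : pX Q (Function.update x j a') = 0 := by
        have := (Finset.sum_eq_zero_iff_of_nonneg
          (fun a' (_ : a' ∈ Finset.univ) => Finset.sum_nonneg fun y' _ => hQnn ((Function.update x j a'), y'))).mp hTQ0 a' (Finset.mem_univ _)
        exact this
      exact (Finset.sum_eq_zero_iff_of_nonneg
        (fun y' _ => hQnn _)).mp h1 y' (Finset.mem_univ _)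
    have hrowQ : ∀ y', pYXmj Q j x y' = 0 := by
      intro y'
      simp only [pYXmj]
      exact Finset.sum_eq_zero fun a' _ => hQall a' y'
    have : pXmj P j x = 0 := by
      rw [hTP]
      exact Finset.sum_eq_zero fun y' _ => by rw [hrowQ y', mul_zero]
    linarith
end

section
/- Let P and Q be joint distributions of (X, Y) with P(X|Y) = Q(X|Y) on the support of P and P(Y) absolutely continuous with respect to Q(Y). If Y ⊥ X_j | X_{-j} holds under Q, then the conditional distributions of X_j given X_{-j} coincide under P and Q: P(X_j | X_{-j}) = Q(X_j | X_{-j}) wherever both are defined. -/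
open Finset Function

variable {p : ℕ} {A B : Type*}

/-- If `P(X|Y) = Q(X|Y)` on the support of `P`, `P(Y) ≪ Q(Y)`, and
`Y ⊥ Xⱼ | X₋ⱼ` under `Q`, then `P(Xⱼ | X₋ⱼ) = Q(Xⱼ | X₋ⱼ)` wherever both are defined. -/
theorem conditional_of_Xj_agrees
    [Fintype A] [Fintype B] (P Q : (Fin p → A) × B → ℝ) (j : Fin p)
    (hP : IsDist P) (hQ : IsDist Q)
    (hcond : ∀ (x : Fin p → A) (y : B), 0 < pY P y → P (x, y) * pY Q y = Q (x, y) * pY P y)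
    (hac : ∀ y : B, pY Q y = 0 → pY P y = 0)
    (hQind : CondIndep Q j) :
    ∀ (x : Fin p → A) (a : A), 0 < pXmj P j x → 0 < pXmj Q j x →
      pX P (Function.update x j a) * pXmj Q j x =
        pX Q (Function.update x j a) * pXmj P j x := by
  intro x a hPx hQx
  have hPz : ∀ z, 0 ≤ P z := hP.1
  have hkey : ∀ (x' : Fin p → A) (y : B), P (x', y) = Q (x', y) * (pY P y / pY Q y) := by
    intro x' y
    have hnn : (0:ℝ) ≤ pY P y := Finset.sum_nonneg fun x _ => hPz (x, y)
    rcases eq_or_lt_of_le hnn with h | h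
    · have h0 : pY P y = 0 := h.symm
      have hz : P (x', y) = 0 :=
        (Finset.sum_eq_zero_iff_of_nonneg fun x _ => hPz (x, y)).mp (by simpa [pY] using h0) x'
          (Finset.mem_univ _)
      simp [hz, h0]
    · have hQY : pY Q y ≠ 0 := fun h0 => (hac y h0 ▸ h).false
      have hc := hcond x' y h
      field_simp
      linarith
  have hPX : ∀ b, pX P (Function.update x j b)
      = ∑ y, Q (Function.update x j b, y) * (pY P y / pY Q y) :=
    fun b => Finset.sum_congr rfl fun y _ => hkey _ y
  have hPXmj : pXmj P j x = ∑ y, pYXmj Q j x y * (pY P y / pY Q y) := by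
    unfold pXmj pX
    rw [Finset.sum_comm]
    refine Finset.sum_congr rfl fun y _ => ?_
    rw [pYXmj, Finset.sum_mul]
    exact Finset.sum_congr rfl fun b _ => hkey _ y
  calc pX P (Function.update x j a) * pXmj Q j x
      = ∑ y, Q (Function.update x j a, y) * (pY P y / pY Q y) * pXmj Q j x := by
        rw [hPX a, Finset.sum_mul]
    _ = ∑ y, pYXmj Q j x y * (pY P y / pY Q y) * pX Q (Function.update x j a) := by
        refine Finset.sum_congr rfl fun y _ => ?_
        linear_combination (pY P y / pY Q y) * hQind x y a hQx
    _ = (∑ y, pYXmj Q j x y * (pY P y / pY Q y)) * pX Q (Function.update x j a) := by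
        rw [Finset.sum_mul]
    _ = pX Q (Function.update x j a) * pXmj P j x := by rw [hPXmj]; ring
end

section
/- Let P and Q be distributions on (X, Y) with P(X|Y)=Q(X|Y) on the support of P and P(Y) absolutely continuous w.r.t. Q(Y). If Y ⊥ X_j | X_{-j} under Q, then P(X_j | Y, X_{-j}) = P(X_j | X_{-j}), i.e., the conditional distribution of X_j given (Y, X_{-j}) under P does not depend on Y. -/
open Finset Function

variable {p : ℕ} {A B : Type*}

/-- If `P(X|Y) = Q(X|Y)` on the support of `P`, `P(Y) ≪ Q(Y)`, and
`Y ⊥ Xⱼ | X₋ⱼ` under `Q`, then `P(Xⱼ | Y, X₋ⱼ) = P(Xⱼ | X₋ⱼ)` at all points where the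
conditioning event `(Y = y, X₋ⱼ = x₋ⱼ)` has positive probability under `P`. -/
theorem conditional_does_not_depend_on_Y
    [Fintype A] [Fintype B] (P Q : (Fin p → A) × B → ℝ) (j : Fin p)
    (hP : IsDist P) (hQ : IsDist Q)
    (hcond : ∀ (x : Fin p → A) (y : B), 0 < pY P y → P (x, y) * pY Q y = Q (x, y) * pY P y)
    (hac : ∀ y : B, pY Q y = 0 → pY P y = 0)
    (hQind : CondIndep Q j) :
    ∀ (x : Fin p → A) (y : B) (a : A), 0 < pYXmj P j x y →
      P (Function.update x j a, y) * pXmj P j x =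
        pX P (Function.update x j a) * pYXmj P j x y := by
  obtain ⟨hPnn, _⟩ := hP
  obtain ⟨hQnn, _⟩ := hQ
  have hPynn : ∀ y, 0 ≤ pY P y := fun y => Finset.sum_nonneg fun _ _ => hPnn _
  have hQynn : ∀ y, 0 ≤ pY Q y := fun y => Finset.sum_nonneg fun _ _ => hQnn _
  have hPzero : ∀ (x' : Fin p → A) (y' : B), pY P y' = 0 → P (x', y') = 0 := by
    intro x' y' h
    exact (Finset.sum_eq_zero_iff_of_nonneg (fun i _ => hPnn (i, y'))).mp h x' (Finset.mem_univ _)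
  have key : ∀ (x' : Fin p → A) (y' : B), P (x', y') * pY Q y' = Q (x', y') * pY P y' := by
    intro x' y'
    rcases (hPynn y').lt_or_eq with h | h
    · exact hcond x' y' h
    · rw [hPzero x' y' h.symm, ← h]; ring
  intro x y a hpos
  have key2 : ∀ (y' : B), pYXmj P j x y' * pY Q y' = pYXmj Q j x y' * pY P y' := by
    intro y'
    simp only [pYXmj, Finset.sum_mul]
    exact Finset.sum_congr rfl fun a' _ => key _ y'
  -- positivity chain
  have hPy : 0 < pY P y := by
    rcases (hPynn y).lt_or_eq with h | h
    · exact h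
    · exfalso
      have : pYXmj P j x y = 0 :=
        Finset.sum_eq_zero fun a' _ => hPzero _ y h.symm
      rw [this] at hpos; exact lt_irrefl 0 hpos
  have hQy : 0 < pY Q y := by
    rcases (hQynn y).lt_or_eq with h | h
    · exact h
    · exfalso; have := hac y h.symm; rw [this] at hPy; exact lt_irrefl 0 hPy
  have hQyxnn : ∀ y', 0 ≤ pYXmj Q j x y' := fun y' =>
    Finset.sum_nonneg fun _ _ => hQnn _
  have hQyx : 0 < pYXmj Q j x y := by
    rcases (hQyxnn y).lt_or_eq with h | h
    · exact h
    · exfalso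
      have h2 := key2 y
      rw [← h, zero_mul] at h2
      have := mul_pos hpos hQy
      rw [h2] at this; exact lt_irrefl 0 this
  have hswapQ : pXmj Q j x = ∑ y', pYXmj Q j x y' := by
    simp only [pXmj, pX, pYXmj]
    exact Finset.sum_comm
  have hQxm : 0 < pXmj Q j x := by
    rw [hswapQ]
    calc 0 < pYXmj Q j x y := hQyx
      _ ≤ ∑ y', pYXmj Q j x y' :=
        Finset.single_le_sum (fun y' _ => hQyxnn y') (Finset.mem_univ y)
  -- the termwise claim
  have claim : ∀ y' : B, P (Function.update x j a, y) * pYXmj P j x y' =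
      P (Function.update x j a, y') * pYXmj P j x y := by
    intro y'
    rcases (hPynn y').lt_or_eq with h | h
    · have hQy' : 0 < pY Q y' := by
        rcases (hQynn y').lt_or_eq with h2 | h2
        · exact h2
        · exfalso; have := hac y' h2.symm; rw [this] at h; exact lt_irrefl 0 h
      have h1 := key (Function.update x j a) y
      have h2 := key (Function.update x j a) y'
      have h3 := key2 y
      have h4 := key2 y'
      have h5 := hQind x y a hQxm
      have h6 := hQind x y' a hQxm
      have hM : pY Q y * pY Q y' * pXmj Q j x ≠ 0 := by positivity
      apply mul_right_cancel₀ hM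
      linear_combination (pYXmj P j x y' * pY Q y' * pXmj Q j x) * h1
        + (Q (Function.update x j a, y) * pY P y * pXmj Q j x) * h4
        + (pYXmj Q j x y' * pY P y' * pY P y) * h5
        - (pYXmj P j x y * pY Q y * pXmj Q j x) * h2
        - (Q (Function.update x j a, y') * pY P y' * pXmj Q j x) * h3
        - (pYXmj Q j x y * pY P y * pY P y') * h6
    · have hz1 : P (Function.update x j a, y') = 0 := hPzero _ y' h.symm
      have hz2 : pYXmj P j x y' = 0 :=
        Finset.sum_eq_zero fun a' _ => hPzero _ y' h.symm
      rw [hz1, hz2]; ring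
  -- assemble
  have hswapP : pXmj P j x = ∑ y', pYXmj P j x y' := by
    simp only [pXmj, pX, pYXmj]
    exact Finset.sum_comm
  have hpXP : pX P (Function.update x j a) = ∑ y', P (Function.update x j a, y') := rfl
  rw [hswapP, hpXP, Finset.mul_sum, Finset.sum_mul]
  exact Finset.sum_congr rfl fun y' _ => claim y'
end

section
/- Let Y be binary and let Q be a joint distribution of (X, Y) with 0 < Q(Y=1) < 1. Define P_0(X) = Q(X | Y=0) (controls-only population) and let P be any joint distribution with P(X) = a mixture α·Q(X|Y=0) + (1-α)·Q(X|Y=1) for some α ∈ [0,1], with P(X|Y)=Q(X|Y) and P(Y=1) = 1-α. If Y ⊥ X_j | X_{-j} under Q, then P(X_j | X_{-j}) = Q(X_j | X_{-j}) wherever both conditionals are defined, for any α ∈ (0,1). -/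
open Finset Function

variable {p : ℕ} {A B : Type*}

/-- **mixture populations.** Let `Y` be binary with `0 < Q(Y=1) < 1`, and
let `P` be a joint distribution with `P(X|Y) = Q(X|Y)`, `P(Y=1) = 1 - α`, and marginal
`P(X) = α·Q(X|Y=0) + (1-α)·Q(X|Y=1)` for some `α ∈ (0,1)` (a population mixing cases and
controls in an arbitrary proportion). If `Y ⊥ Xⱼ | X₋ⱼ` under `Q`, then
`P(Xⱼ | X₋ⱼ) = Q(Xⱼ | X₋ⱼ)` wherever both conditionals are defined. -/
theorem mixture_population_conditional_agrees
    [Fintype A] (P Q : (Fin p → A) × Bool → ℝ) (j : Fin p) (α : ℝ)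
    (hα : 0 < α) (hα' : α < 1)
    (hP : IsDist P) (hQ : IsDist Q)
    (hQ1 : 0 < pY Q true) (hQ1' : pY Q true < 1)
    (hcond : ∀ (x : Fin p → A) (y : Bool),
      0 < pY P y → P (x, y) * pY Q y = Q (x, y) * pY P y)
    (hPmarg : pY P true = 1 - α)
    (hmix : ∀ x : Fin p → A,
      pX P x = α * (Q (x, false) / pY Q false) + (1 - α) * (Q (x, true) / pY Q true))
    (hQind : CondIndep Q j) :
    ∀ (x : Fin p → A) (a : A), 0 < pXmj P j x → 0 < pXmj Q j x →
      pX P (Function.update x j a) * pXmj Q j x =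
        pX Q (Function.update x j a) * pXmj P j x := by
  intro x a hPpos hQpos
  have hsum : pY Q false + pY Q true = 1 := by
    have h := hQ.2
    rw [Fintype.sum_prod_type] at h
    simp only [Fintype.sum_bool] at h
    rw [Finset.sum_add_distrib] at h
    unfold pY
    linarith
  have hq0 : 0 < pY Q false := by linarith
  have hq0' : pY Q false ≠ 0 := ne_of_gt hq0
  have hq1' : pY Q true ≠ 0 := ne_of_gt hQ1
  have hci0 := hQind x false a hQpos
  have hci1 := hQind x true a hQpos
  have hPmj : pXmj P j x = α * pYXmj Q j x false / pY Q false
      + (1 - α) * pYXmj Q j x true / pY Q true := by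
    unfold pXmj pYXmj
    rw [Finset.sum_congr rfl (fun b _ => hmix (Function.update x j b)),
      Finset.sum_add_distrib, ← Finset.mul_sum, ← Finset.mul_sum,
      ← Finset.sum_div, ← Finset.sum_div]
    ring
  rw [hmix (Function.update x j a), hPmj]
  field_simp
  linear_combination (α * pY Q true) * hci0 + ((1 - α) * pY Q false) * hci1
end
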